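/- If A and B are homogeneous modules of a homogeneous relation H and A overlaps B, then A∪B is a homogeneous module of H. -/
import Mathlib


/-- `H` is a homogeneous relation: for each `x`, the binary relation
`H x · ·` is an equivalence relation on the elements distinct from `x`. -/
def IsHomRel {X : Type*} (H : X → X → X → Prop) : Prop :=
  (∀ x y, y ≠ x → H x y y) ∧
  (∀ x y z, y ≠ x → z ≠ x → H x y z → H x z y) ∧
  (∀ x y z w, y ≠ x → z ≠ x → w ≠ x → H x y z → H x z w → H x y w)

/-- `M` is a homogeneous module of `H`. -/
def IsModule {X : Type*} (H : X → X → X → Prop) (M : Set X) : Prop :=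
  ∀ m ∈ M, ∀ m' ∈ M, ∀ x ∉ M, H x m m'

/-- Two sets overlap. -/
def Overlap {X : Type*} (A B : Set X) : Prop :=
  (A ∩ B).Nonempty ∧ (A \ B).Nonempty ∧ (B \ A).Nonempty

theorem stmt_3 {X : Type*} [Fintype X] (H : X → X → X → Prop)
    (hH : IsHomRel H) (A B : Set X) (hA : IsModule H A) (hB : IsModule H B)
    (hover : Overlap A B) : IsModule H (A ∪ B) := by
  obtain ⟨⟨c, hcA, hcB⟩, -, -⟩ := hover
  obtain ⟨-, -, htrans⟩ := hH
  intro m hm m' hm' x hx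
  rw [Set.mem_union] at hx
  push_neg at hx
  obtain ⟨hxA, hxB⟩ := hx
  have hne : ∀ y : X, y ∈ A ∪ B → y ≠ x := by
    rintro y hy rfl; rcases hy with h | h; exact hxA h; exact hxB h
  rcases hm with hmA | hmB <;> rcases hm' with h'A | h'B
  · exact hA m hmA m' h'A x hxA
  · exact htrans x m c m' (fun h => hxA (h ▸ hmA)) (fun h => hxA (h ▸ hcA))
      (fun h => hxB (h ▸ h'B)) (hA m hmA c hcA x hxA) (hB c hcB m' h'B x hxB)
  · exact htrans x m c m' (fun h => hxB (h ▸ hmB)) (fun h => hxB (h ▸ hcB))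
      (fun h => hxA (h ▸ h'A)) (hB m hmB c hcB x hxB) (hA c hcA m' h'A x hxA)
  · exact hB m hmB m' h'B x hxB
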